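/- Let (X, d) be a metric space, θ a lacunary sequence with limsup_r k_r/k_{r−1}^β < ∞, and β ∈ (0,1]. If (x_k) is strongly 1-Cesàro summable of order β to x′ (i.e., (1/t^β) Σ_{k≤t} d(x_k, x′) → 0) and strongly N_θ(1)-summable to x″ (i.e., (1/h_r) Σ_{k ∈ I_r} d(x_k, x″) → 0), then x′ = x″. -/

import Mathlib

open Filter Finset

/-- If limsup k_{r+1}/k_r^β < ∞ and (x_k) is strongly 1-Cesàro summable
of order β to x′ and strongly N_θ(1)-summable to x″, then x′ = x″. -/
theorem stmt_11 {X : Type*} [MetricSpace X]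
    (k : ℕ → ℕ) (hk : StrictMono k) (hk0 : k 0 = 0)
    (hh : Tendsto (fun r => ((k (r + 1) - k r : ℕ) : ℝ)) atTop atTop)
    (β : ℝ) (hβ0 : 0 < β) (hβ1 : β ≤ 1)
    (hbd : ∃ M : ℝ, ∀ᶠ r in atTop, ((k (r + 1) : ℕ) : ℝ) / ((k r : ℕ) : ℝ) ^ β ≤ M)
    (x : ℕ → X) (x' x'' : X)
    (hx' : Tendsto (fun t : ℕ =>
      (1 / (t : ℝ) ^ β) * ∑ i ∈ Finset.Icc 1 t, dist (x i) x') atTop (nhds 0))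
    (hx'' : Tendsto (fun r =>
      (1 / ((k (r + 1) - k r : ℕ) : ℝ)) *
        ∑ i ∈ Finset.Ioc (k r) (k (r + 1)), dist (x i) x'')
      atTop (nhds 0)) :
    x' = x'' := by
  have hkT : Tendsto (fun r => ((k (r + 1) : ℕ) : ℝ)) atTop atTop := by
    apply tendsto_atTop_mono (fun r => ?_) tendsto_natCast_atTop_atTop
    exact_mod_cast (hk.le_apply).trans (hk.monotone (Nat.le_succ r))
  by_cases hβ : β = 1
  swap
  · -- β < 1 leads to a contradiction with hbd
    exfalso
    have hβlt : β < 1 := lt_of_le_of_ne hβ1 hβ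
    obtain ⟨M, hM⟩ := hbd
    have h1 : ∀ᶠ r in atTop, ((k (r + 1) : ℕ) : ℝ) ^ (1 - β) ≤ M := by
      filter_upwards [hM, eventually_ge_atTop 1] with r hr hr1
      have hk1 : (1 : ℝ) ≤ (k r : ℝ) := by
        have h : r ≤ k r := hk.le_apply
        exact_mod_cast le_trans hr1 h
      have hkk : (0 : ℝ) < (k (r + 1) : ℝ) := by
        have : (0:ℝ) < (k r : ℝ) := by linarith
        have h2 : (k r : ℝ) ≤ (k (r+1) : ℝ) := by exact_mod_cast (hk.monotone (Nat.le_succ r))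
        linarith
      calc ((k (r + 1) : ℕ) : ℝ) ^ (1 - β)
          = (k (r + 1) : ℝ) / (k (r + 1) : ℝ) ^ β := by
            rw [Real.rpow_sub hkk, Real.rpow_one]
        _ ≤ (k (r + 1) : ℝ) / (k r : ℝ) ^ β := by
            apply div_le_div_of_nonneg_left hkk.le
            · positivity
            · apply Real.rpow_le_rpow (by positivity) _ hβ0.le
              exact_mod_cast (hk.monotone (Nat.le_succ r))
        _ ≤ M := hr
    have h2 : Tendsto (fun r => ((k (r + 1) : ℕ) : ℝ) ^ (1 - β)) atTop atTop :=
      (tendsto_rpow_atTop (by linarith)).comp hkT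
    obtain ⟨r, hr1, hr2⟩ := ((h2.eventually_ge_atTop (M + 1)).and h1).exists
    linarith
  subst hβ
  simp only [Real.rpow_one] at hx' hbd
  -- positivity of block lengths
  have hpos : ∀ s : ℕ, 0 < ((k (s + 1) - k s : ℕ) : ℝ) := by
    intro s
    have : k s < k (s + 1) := hk (Nat.lt_succ_self s)
    have : 0 < k (s + 1) - k s := Nat.sub_pos_of_lt this
    exact_mod_cast this
  -- decomposition of the initial sum into blocks
  have hpart : ∀ r : ℕ, ∑ i ∈ Finset.Icc 1 (k (r + 1)), dist (x i) x''
      = ∑ s ∈ Finset.range (r + 1), ∑ i ∈ Finset.Ioc (k s) (k (s + 1)), dist (x i) x'' := by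
    intro r
    induction r with
    | zero =>
      rw [Finset.sum_range_one, hk0,
        show Finset.Icc 1 (k 1) = Finset.Ioc 0 (k 1) from Finset.Icc_add_one_left_eq_Ioc 0 _]
    | succ n ih =>
      rw [Finset.sum_range_succ, ← ih,
        show Finset.Icc 1 (k (n + 1)) = Finset.Ioc 0 (k (n + 1)) from Finset.Icc_add_one_left_eq_Ioc 0 _,
        show Finset.Icc 1 (k (n + 1 + 1)) = Finset.Ioc 0 (k (n + 1 + 1)) from
          Finset.Icc_add_one_left_eq_Ioc 0 _]
      exact (Finset.sum_Ioc_consecutive _ (Nat.zero_le _)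
        (hk.monotone (Nat.le_succ _))).symm
  -- telescoping sum of block lengths
  have htel : ∀ r : ℕ, ∑ s ∈ Finset.range (r + 1), ((k (s + 1) - k s : ℕ) : ℝ)
      = ((k (r + 1) : ℕ) : ℝ) := by
    intro r
    induction r with
    | zero => simp [hk0]
    | succ n ih =>
      rw [Finset.sum_range_succ, ih]
      have h1 : k (n + 1) ≤ k (n + 2) := hk.monotone (Nat.le_succ _)
      push_cast [Nat.cast_sub h1]
      ring
  have key : ∀ ε : ℝ, 0 < ε → dist x' x'' ≤ 3 * ε := by
    intro ε hε
    have hblk : ∀ᶠ s in atTop,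
        ∑ i ∈ Finset.Ioc (k s) (k (s + 1)), dist (x i) x'' ≤ ε * ((k (s + 1) - k s : ℕ) : ℝ) := by
      filter_upwards [hx''.eventually_lt_const hε] with s hs
      have h := hpos s
      rw [one_div, inv_mul_lt_iff₀ h] at hs
      linarith [hs]
    obtain ⟨R, hR⟩ := eventually_atTop.mp hblk
    set C := ∑ s ∈ Finset.range R, ∑ i ∈ Finset.Ioc (k s) (k (s + 1)), dist (x i) x'' with hC
    have hC0 : 0 ≤ C := Finset.sum_nonneg fun s _ => Finset.sum_nonneg fun i _ => dist_nonneg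
    have hsum : ∀ r : ℕ, R ≤ r →
        ∑ i ∈ Finset.Icc 1 (k (r + 1)), dist (x i) x'' ≤ C + ε * ((k (r + 1) : ℕ) : ℝ) := by
      intro r hr
      rw [hpart r]
      have hsplit : Finset.range (r + 1) = Finset.range R ∪ Finset.Ico R (r + 1) := by
        rw [Finset.range_eq_Ico, Finset.range_eq_Ico]
        exact (Finset.Ico_union_Ico_eq_Ico (Nat.zero_le _) (by omega)).symm
      rw [hsplit, Finset.sum_union (by
        rw [Finset.range_eq_Ico]
        exact Finset.Ico_disjoint_Ico_consecutive 0 R (r + 1))]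
      have h1 : ∑ s ∈ Finset.Ico R (r + 1), ∑ i ∈ Finset.Ioc (k s) (k (s + 1)), dist (x i) x''
          ≤ ∑ s ∈ Finset.Ico R (r + 1), ε * ((k (s + 1) - k s : ℕ) : ℝ) :=
        Finset.sum_le_sum fun s hs => hR s (Finset.mem_Ico.mp hs).1
      have h2 : ∑ s ∈ Finset.Ico R (r + 1), ε * ((k (s + 1) - k s : ℕ) : ℝ)
          ≤ ε * ((k (r + 1) : ℕ) : ℝ) := by
        rw [← Finset.mul_sum]
        apply mul_le_mul_of_nonneg_left _ hε.le
        rw [← htel r]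
        apply Finset.sum_le_sum_of_subset_of_nonneg
        · intro s hs
          simp only [Finset.mem_Ico] at hs
          exact Finset.mem_range.mpr hs.2
        · intro s _ _
          exact (hpos s).le
      linarith
    -- choose a large r
    have hA : Tendsto (fun r => (1 / ((k (r + 1) : ℕ) : ℝ)) *
        ∑ i ∈ Finset.Icc 1 (k (r + 1)), dist (x i) x') atTop (nhds 0) :=
      hx'.comp (hk.tendsto_atTop.comp (tendsto_add_atTop_nat 1))
    have hCendto : Tendsto (fun r => C / ((k (r + 1) : ℕ) : ℝ)) atTop (nhds 0) :=
      tendsto_const_nhds.div_atTop hkT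
    obtain ⟨r, ⟨hrA, hrC⟩, hrR, hrk⟩ := (((hA.eventually_lt_const hε).and
      (hCendto.eventually_lt_const hε)).and
      ((eventually_ge_atTop R).and (hkT.eventually_ge_atTop 1))).exists
    set T : ℝ := ((k (r + 1) : ℕ) : ℝ) with hT
    have hT0 : (0 : ℝ) < T := by linarith
    have htri : T * dist x' x'' ≤ (∑ i ∈ Finset.Icc 1 (k (r + 1)), dist (x i) x')
        + ∑ i ∈ Finset.Icc 1 (k (r + 1)), dist (x i) x'' := by
      have hcard : (Finset.Icc 1 (k (r + 1))).card = k (r + 1) := by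
        rw [Nat.card_Icc]; omega
      calc T * dist x' x'' = ∑ _i ∈ Finset.Icc 1 (k (r + 1)), dist x' x'' := by
            rw [Finset.sum_const, hcard, nsmul_eq_mul]
        _ ≤ ∑ i ∈ Finset.Icc 1 (k (r + 1)), (dist (x i) x' + dist (x i) x'') := by
            apply Finset.sum_le_sum
            intro i _
            rw [dist_comm (x i) x']
            exact dist_triangle x' (x i) x''
        _ = _ := Finset.sum_add_distrib
    have h1 : ∑ i ∈ Finset.Icc 1 (k (r + 1)), dist (x i) x' ≤ ε * T := by
      rw [one_div, inv_mul_lt_iff₀ hT0] at hrA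
      nlinarith
    have h2 : C ≤ ε * T := by
      rw [div_lt_iff₀ hT0] at hrC
      nlinarith
    have h3 := hsum r hrR
    nlinarith [h3, htri, h1, h2, hT0, dist_nonneg (x := x') (y := x'')]
  have h0 : dist x' x'' ≤ 0 := by
    by_contra h
    push_neg at h
    have := key (dist x' x'' / 4) (by linarith)
    linarith
  exact eq_of_dist_eq_zero (le_antisymm h0 dist_nonneg)
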